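/- Fix d_A, d_B ≥ 1, a unit vector ψ ∈ ℂ² ⊗ ℂ^{d_A} ⊗ ℂ^{d_B}, and p_err ≥ 0. Let V_0, V_1 be orthogonal projections on ℂ² with V_0 + V_1 = I, let {A_a}_{a∈{0,1,⊥}} be a POVM on ℂ^{d_A} and {B_a}_{a∈{0,1,⊥}} a POVM on ℂ^{d_B}. Assume: (i) ⟨I·A_a·B_b⟩_ψ = 0 for all a ≠ b in {0,1,⊥}; (ii) ⟨V_1·A_0·B_0⟩_ψ ≤ p_err·⟨V_1·(A_0+A_1)·(B_0+B_1)⟩_ψ and ⟨V_0·A_1·B_1⟩_ψ ≤ p_err·⟨V_0·(A_0+A_1)·(B_0+B_1)⟩_ψ. Then ⟨V_1·A_0·I⟩_ψ + ⟨V_0·A_1·I⟩_ψ ≤ p_err·(⟨I·A_0·B_0⟩_ψ + ⟨I·A_1·B_1⟩_ψ), and likewise ⟨V_1·I·B_0⟩_ψ + ⟨V_0·I·B_1⟩_ψ ≤ p_err·(⟨I·A_0·B_0⟩_ψ + ⟨I·A_1·B_1⟩_ψ). -/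

import Mathlib

open Matrix Kronecker BigOperators
open scoped ComplexOrder

noncomputable section

/-- ⟨ψ, (V ⊗ A ⊗ B) ψ⟩ as a real number. -/
def exval {dA dB : ℕ} (χ : Fin 2 × Fin dA × Fin dB → ℂ)
    (V : Matrix (Fin 2) (Fin 2) ℂ) (A : Matrix (Fin dA) (Fin dA) ℂ)
    (B : Matrix (Fin dB) (Fin dB) ℂ) : ℝ :=
  (star χ ⬝ᵥ (V ⊗ₖ (A ⊗ₖ B)).mulVec χ).re

/-- A POVM with outcomes {0, 1, ⊥} (⊥ encoded as the index 2). -/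
def IsPOVM {d : ℕ} (A : Fin 3 → Matrix (Fin d) (Fin d) ℂ) : Prop :=
  (∀ a, (A a).PosSemidef) ∧ A 0 + A 1 + A 2 = 1

lemma conjTranspose_kron {l m n p : Type*} (A : Matrix l m ℂ) (B : Matrix n p ℂ) :
    (A ⊗ₖ B)ᴴ = Aᴴ ⊗ₖ Bᴴ := by
  ext ⟨i, j⟩ ⟨k, l⟩
  simp [Matrix.conjTranspose_apply, star_mul']

lemma kron_psd {m n : Type*} [Fintype m] [Fintype n]
    {A : Matrix m m ℂ} {B : Matrix n n ℂ}
    (hA : A.PosSemidef) (hB : B.PosSemidef) : (A ⊗ₖ B).PosSemidef := by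
  exact Matrix.PosSemidef.kronecker hA hB

lemma exval_add_V {dA dB : ℕ} (ψ : Fin 2 × Fin dA × Fin dB → ℂ)
    (W W' : Matrix (Fin 2) (Fin 2) ℂ) (A : Matrix (Fin dA) (Fin dA) ℂ)
    (B : Matrix (Fin dB) (Fin dB) ℂ) :
    exval ψ (W + W') A B = exval ψ W A B + exval ψ W' A B := by
  simp [exval, Matrix.add_kronecker, Matrix.add_mulVec, dotProduct_add]

lemma exval_add_A {dA dB : ℕ} (ψ : Fin 2 × Fin dA × Fin dB → ℂ)
    (W : Matrix (Fin 2) (Fin 2) ℂ) (A A' : Matrix (Fin dA) (Fin dA) ℂ)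
    (B : Matrix (Fin dB) (Fin dB) ℂ) :
    exval ψ W (A + A') B = exval ψ W A B + exval ψ W A' B := by
  simp [exval, Matrix.add_kronecker, Matrix.kronecker_add, Matrix.add_mulVec,
    dotProduct_add]

lemma exval_add_B {dA dB : ℕ} (ψ : Fin 2 × Fin dA × Fin dB → ℂ)
    (W : Matrix (Fin 2) (Fin 2) ℂ) (A : Matrix (Fin dA) (Fin dA) ℂ)
    (B B' : Matrix (Fin dB) (Fin dB) ℂ) :
    exval ψ W A (B + B') = exval ψ W A B + exval ψ W A B' := by
  simp [exval, Matrix.add_kronecker, Matrix.kronecker_add, Matrix.add_mulVec,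
    dotProduct_add]

theorem perr_marginal_bounds {dA dB : ℕ} (hdA : 1 ≤ dA) (hdB : 1 ≤ dB)
    (ψ : Fin 2 × Fin dA × Fin dB → ℂ) (hψ : ∑ i, ‖ψ i‖ ^ 2 = 1)
    (perr : ℝ) (hperr : 0 ≤ perr)
    (V : Fin 2 → Matrix (Fin 2) (Fin 2) ℂ)
    (hVproj : ∀ a, (V a)ᴴ = V a ∧ V a * V a = V a)
    (hVsum : V 0 + V 1 = 1)
    (A : Fin 3 → Matrix (Fin dA) (Fin dA) ℂ)
    (B : Fin 3 → Matrix (Fin dB) (Fin dB) ℂ)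
    (hA : IsPOVM A) (hB : IsPOVM B)
    (hzero : ∀ a b : Fin 3, a ≠ b → exval ψ 1 (A a) (B b) = 0)
    (herr1 : exval ψ (V 1) (A 0) (B 0) ≤
      perr * exval ψ (V 1) (A 0 + A 1) (B 0 + B 1))
    (herr2 : exval ψ (V 0) (A 1) (B 1) ≤
      perr * exval ψ (V 0) (A 0 + A 1) (B 0 + B 1)) :
    exval ψ (V 1) (A 0) 1 + exval ψ (V 0) (A 1) 1 ≤
      perr * (exval ψ 1 (A 0) (B 0) + exval ψ 1 (A 1) (B 1)) ∧
    exval ψ (V 1) 1 (B 0) + exval ψ (V 0) 1 (B 1) ≤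
      perr * (exval ψ 1 (A 0) (B 0) + exval ψ 1 (A 1) (B 1)) := by
  have hVpsd : ∀ a, (V a).PosSemidef := by
    intro a
    have h := Matrix.posSemidef_conjTranspose_mul_self (V a)
    rwa [(hVproj a).1, (hVproj a).2] at h
  have key : ∀ (W : Matrix (Fin 2) (Fin 2) ℂ), W.PosSemidef → ∀ i j : Fin 3,
      0 ≤ exval ψ W (A i) (B j) := by
    intro W hW i j
    simpa [exval] using
      (kron_psd hW (kron_psd (hA.1 i) (hB.1 j))).re_dotProduct_nonneg ψ
  have split : ∀ (i j : Fin 3), exval ψ 1 (A i) (B j) =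
      exval ψ (V 0) (A i) (B j) + exval ψ (V 1) (A i) (B j) := by
    intro i j
    rw [← hVsum, exval_add_V]
  have vzero : ∀ (a : Fin 2) (i j : Fin 3), i ≠ j →
      exval ψ (V a) (A i) (B j) = 0 := by
    intro a i j hij
    have h0 := hzero i j hij
    rw [split] at h0
    have h1 := key (V 0) (hVpsd 0) i j
    have h2 := key (V 1) (hVpsd 1) i j
    have ha : a = 0 ∨ a = 1 := by omega
    rcases ha with rfl | rfl <;> linarith
  have e1 : exval ψ (V 1) (A 0) 1 = exval ψ (V 1) (A 0) (B 0) := by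
    rw [← hB.2, exval_add_B, exval_add_B,
      vzero 1 0 1 (by decide), vzero 1 0 2 (by decide)]
    ring
  have e2 : exval ψ (V 0) (A 1) 1 = exval ψ (V 0) (A 1) (B 1) := by
    rw [← hB.2, exval_add_B, exval_add_B,
      vzero 0 1 0 (by decide), vzero 0 1 2 (by decide)]
    ring
  have e3 : exval ψ (V 1) 1 (B 0) = exval ψ (V 1) (A 0) (B 0) := by
    rw [← hA.2, exval_add_A, exval_add_A,
      vzero 1 1 0 (by decide), vzero 1 2 0 (by decide)]
    ring
  have e4 : exval ψ (V 0) 1 (B 1) = exval ψ (V 0) (A 1) (B 1) := by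
    rw [← hA.2, exval_add_A, exval_add_A,
      vzero 0 0 1 (by decide), vzero 0 2 1 (by decide)]
    ring
  have r1 : exval ψ (V 1) (A 0 + A 1) (B 0 + B 1) =
      exval ψ (V 1) (A 0) (B 0) + exval ψ (V 1) (A 1) (B 1) := by
    rw [exval_add_A, exval_add_B, exval_add_B,
      vzero 1 0 1 (by decide), vzero 1 1 0 (by decide)]
    ring
  have r2 : exval ψ (V 0) (A 0 + A 1) (B 0 + B 1) =
      exval ψ (V 0) (A 0) (B 0) + exval ψ (V 0) (A 1) (B 1) := by
    rw [exval_add_A, exval_add_B, exval_add_B,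
      vzero 0 0 1 (by decide), vzero 0 1 0 (by decide)]
    ring
  rw [r1] at herr1
  rw [r2] at herr2
  rw [e1, e2, e3, e4, split 0 0, split 1 1]
  constructor <;> nlinarith [herr1, herr2]

end
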